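/- The SSPERK(4,3) method satisfies the SSP conditions at parameter r = 2: with K = [[A, 0], [bᵀ, 0]] ∈ ℝ^{5×5}, every entry of K(I + 2K)^{-1} is nonnegative and every component of 2K(I + 2K)^{-1}e is at most 1. Hence the SSP coefficient of SSPERK(4,3) is at least 2. -/

import Mathlib

open Matrix

/-- The matrix `K = [[A, 0], [bᵀ, 0]] ∈ ℝ^{(s+1)×(s+1)}`. -/
noncomputable def mkK {s : ℕ} (A : Matrix (Fin s) (Fin s) ℝ) (b : Fin s → ℝ) :
    Matrix (Fin (s + 1)) (Fin (s + 1)) ℝ :=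
  Matrix.of fun i j =>
    if hj : (j : ℕ) < s then
      if hi : (i : ℕ) < s then A ⟨i, hi⟩ ⟨j, hj⟩ else b ⟨j, hj⟩
    else 0

/-- Coefficient matrix of the optimal SSPERK(4,3) method. -/
noncomputable def A43 : Matrix (Fin 4) (Fin 4) ℝ :=
  !![0, 0, 0, 0;
     1/2, 0, 0, 0;
     1/2, 1/2, 0, 0;
     1/6, 1/6, 1/6, 0]

/-- Weights of the optimal SSPERK(4,3) method. -/
noncomputable def b43 : Fin 4 → ℝ := ![1/6, 1/6, 1/6, 1/2]

noncomputable def K5 : Matrix (Fin 5) (Fin 5) ℝ :=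
  !![0, 0, 0, 0, 0; 1/2, 0, 0, 0, 0; 1/2, 1/2, 0, 0, 0;
     1/6, 1/6, 1/6, 0, 0; 1/6, 1/6, 1/6, 1/2, 0]

noncomputable def N5 : Matrix (Fin 5) (Fin 5) ℝ :=
  !![1, 0, 0, 0, 0; -1, 1, 0, 0, 0; 0, -1, 1, 0, 0; 0, 0, -1/3, 1, 0; 0, 0, 0, -1, 1]

noncomputable def M5 : Matrix (Fin 5) (Fin 5) ℝ :=
  !![1, 0, 0, 0, 0; 1, 1, 0, 0, 0; 1, 1, 1, 0, 0; 1/3, 1/3, 1/3, 1, 0; 1/3, 1/3, 1/3, 1, 1]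

noncomputable def P5 : Matrix (Fin 5) (Fin 5) ℝ :=
  !![0, 0, 0, 0, 0; 1/2, 0, 0, 0, 0; 0, 1/2, 0, 0, 0; 0, 0, 1/6, 0, 0; 0, 0, 0, 1/2, 0]

set_option maxRecDepth 8000 in
lemma mkK_eq : mkK A43 b43 = K5 := by
  ext i j
  fin_cases i <;> fin_cases j <;> rfl

set_option maxRecDepth 8000 in
lemma hM : 1 + (2:ℝ) • K5 = M5 := by
  ext i j
  fin_cases i <;> fin_cases j <;>
    norm_num [K5, M5, Matrix.one_apply, Matrix.vecHead, Matrix.vecTail, Fin.ext_iff]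

set_option maxRecDepth 8000 in
lemma hMN : M5 * N5 = 1 := by
  ext i j
  fin_cases i <;> fin_cases j <;>
    norm_num [Matrix.mul_apply, Fin.sum_univ_succ, M5, N5, Matrix.one_apply,
      Matrix.vecHead, Matrix.vecTail, Fin.ext_iff]

set_option maxRecDepth 8000 in
lemma hKN : K5 * N5 = P5 := by
  ext i j
  fin_cases i <;> fin_cases j <;>
    norm_num [Matrix.mul_apply, Fin.sum_univ_succ, K5, N5, P5,
      Matrix.vecHead, Matrix.vecTail, Fin.ext_iff]

lemma inv_eq5 : (1 + (2 : ℝ) • K5)⁻¹ = N5 := by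
  rw [hM]
  exact Matrix.inv_eq_right_inv hMN

/-- SSPERK(4,3) satisfies the SSP conditions at `r = 2`: with
`K = [[A, 0], [bᵀ, 0]] ∈ ℝ^{5×5}`, `K(I + 2K)⁻¹ ≥ 0` entrywise and
`2K(I + 2K)⁻¹ e ≤ e` componentwise; hence its SSP coefficient is at least `2`. -/
theorem ssperk43_ssp_conditions :
    (∀ i j : Fin 5, 0 ≤ (mkK A43 b43 * (1 + (2 : ℝ) • mkK A43 b43)⁻¹) i j) ∧
    (∀ i : Fin 5,
      ((2 : ℝ) • (mkK A43 b43 * (1 + (2 : ℝ) • mkK A43 b43)⁻¹)).mulVec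
        (fun _ => 1) i ≤ 1) := by
  rw [mkK_eq, inv_eq5, hKN]
  constructor
  · intro i j
    fin_cases i <;> fin_cases j <;>
      norm_num [P5, Matrix.vecHead, Matrix.vecTail, Fin.ext_iff]
  · intro i
    fin_cases i <;>
      norm_num [Matrix.mulVec, dotProduct, Fin.sum_univ_succ, P5,
        Matrix.smul_apply, Matrix.vecHead, Matrix.vecTail, Fin.ext_iff]
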